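/- With Δ(μ,ν;x) given by the closed product formula, the Flatness identity holds: if the integral weights ν and μ both lie in the closure of one and the same Weyl chamber (i.e. there is a chamber C with ⟨ν,α^∨⟩ and ⟨μ,α^∨⟩ weakly of the same sign pattern determined by C), then Δ(μ,ν;x) ≡ 1 for all x ∈ W (taking the normalizing constant c = 1). -/
import Mathlib


/-!
STATEMENT 11 (Flatness identity): if the integral weights ν and μ lie in the
closure of one and the same Weyl chamber — i.e. for every root α the pairings
⟨ν,α^∨⟩ and ⟨μ,α^∨⟩ are weakly of the same sign — then Δ(μ,ν;x) ≡ 1 for all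
x ∈ W (Δ given by the closed product formula, c = 1).  Since the closed
formula depends on x only through the set `neg = {α ∈ R⁺ : xα ∈ R⁻}`, the
statement is formulated for an arbitrary such subset of positive roots.
-/

open Finset

def abar (n : ℤ) : ℕ := if n < 0 then 1 else 0

noncomputable def Del {k V ι : Type*} [Field k] [AddCommGroup V] [Module k V]
    (c : ι → V →ₗ[k] k) (neg : Finset ι) (nν nμ : ι → ℤ) (ν μ τ : V) : k :=
  ∏ α ∈ neg,
    ((c α τ) ^ abar (nν α) * (c α (τ + ν)) ^ abar (nμ α) *
        (c α (τ + ν + μ)) ^ abar (nν α + nμ α)) /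
      ((c α τ) ^ abar (nν α + nμ α) * (c α (τ + ν)) ^ abar (nν α) *
        (c α (τ + ν + μ)) ^ abar (nμ α))

theorem stmt11 {k V ι : Type*} [Field k] [CharZero k] [AddCommGroup V] [Module k V]
    (c : ι → V →ₗ[k] k) (ρ ν μ : V) (nν nμ : ι → ℤ)
    (hν : ∀ α, c α ν = (nν α : k)) (hμ : ∀ α, c α μ = (nμ α : k))
    -- ν and μ lie in the closure of the same Weyl chamber
    (hchamber : ∀ α, (0 ≤ nν α ∧ 0 ≤ nμ α) ∨ (nν α ≤ 0 ∧ nμ α ≤ 0))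
    (neg : Finset ι)   -- = {α ∈ R⁺ : xα ∈ R⁻} for any x ∈ W
    (τ : V)
    (h0 : ∀ α ∈ neg, c α (τ + ρ) ≠ 0)
    (h1 : ∀ α ∈ neg, c α (τ + ρ + ν) ≠ 0)
    (h2 : ∀ α ∈ neg, c α (τ + ρ + ν + μ) ≠ 0) :
    Del c neg nν nμ ν μ (τ + ρ) = 1 := by
  unfold Del
  apply Finset.prod_eq_one
  intro α hα
  have ha := h0 α hα
  have hb := h1 α hα
  have hd := h2 α hα
  have hbν : c α (τ + ρ + ν) = c α (τ + ρ) + (nν α : k) := by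
    rw [map_add, hν]
  have hdμ : c α (τ + ρ + ν + μ) = c α (τ + ρ + ν) + (nμ α : k) := by
    rw [map_add, hμ]
  rcases hchamber α with ⟨h1', h2'⟩ | ⟨h1', h2'⟩
  · simp [abar, not_lt.2 h1', not_lt.2 h2', not_lt.2 (add_nonneg h1' h2')]
  · rcases h1'.lt_or_eq with h | h
    · rcases h2'.lt_or_eq with h' | h'
      · simp only [abar, if_pos h, if_pos h', if_pos (by omega : nν α + nμ α < 0), pow_one]
        exact div_self (mul_ne_zero (mul_ne_zero ha hb) hd)
      · have hb' : c α (τ + ρ + ν + μ) = c α (τ + ρ + ν) := by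
          rw [hdμ, h']; simp
        simp only [abar, if_pos h, if_neg (by omega : ¬ nμ α < 0),
          if_pos (by omega : nν α + nμ α < 0), pow_one, pow_zero, one_mul, mul_one, hb']
        exact div_self (mul_ne_zero ha hb)
    · have hb' : c α (τ + ρ + ν) = c α (τ + ρ) := by
        rw [hbν, h]; simp
      by_cases h' : nμ α < 0
      · simp only [abar, if_neg (by omega : ¬ nν α < 0), if_pos h',
          if_pos (by omega : nν α + nμ α < 0), pow_one, pow_zero, one_mul, mul_one, hb']
        exact div_self (mul_ne_zero ha hd)
      · simp [abar, if_neg (by omega : ¬ nν α < 0), if_neg h',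
          if_neg (by omega : ¬ nν α + nμ α < 0)]
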